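/- Let d ≥ 1, λ > 0, θ ∈ ℝ^d, and let φ₁, …, φ_n ∈ ℝ^d and y₁, …, y_n ∈ ℝ. Define Λ = λ I + Σ_{j=1}^n φ_j φ_jᵀ and the regularized least-squares estimator θ̂ = Λ^{−1} Σ_{j=1}^n φ_j y_j. Then for every φ ∈ ℝ^d: |⟨φ, θ̂ − θ⟩| ≤ ‖φ‖_{Λ^{−1}} · ( ‖ Σ_{j=1}^n φ_j (y_j − ⟨θ, φ_j⟩) ‖_{Λ^{−1}} + λ ‖θ‖_{Λ^{−1}} ), and moreover λ ‖θ‖_{Λ^{−1}} ≤ √λ · ‖θ‖₂. -/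

import Mathlib

open Matrix

lemma my_sum_mulVec {ι : Type*} (s : Finset ι) {d : ℕ} (M : ι → Matrix (Fin d) (Fin d) ℝ)
    (x : Fin d → ℝ) : (∑ j ∈ s, M j) *ᵥ x = ∑ j ∈ s, M j *ᵥ x := by
  ext i
  simp [Matrix.mulVec, dotProduct, Finset.sum_apply, Matrix.sum_apply, Finset.sum_mul]
  rw [Finset.sum_comm]

lemma my_vecMulVec_mulVec {d : ℕ} (v x : Fin d → ℝ) :
    vecMulVec v v *ᵥ x = (v ⬝ᵥ x) • v := by
  ext i
  simp [Matrix.mulVec, dotProduct, vecMulVec_apply, Finset.sum_mul, Finset.mul_sum]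
  exact Finset.sum_congr rfl fun j _ => by ring

lemma my_dotProduct_sum {ι : Type*} (s : Finset ι) {d : ℕ} (v : Fin d → ℝ) (w : ι → Fin d → ℝ) :
    v ⬝ᵥ (∑ j ∈ s, w j) = ∑ j ∈ s, v ⬝ᵥ w j := by
  simp [dotProduct, Finset.sum_apply, Finset.mul_sum]
  rw [Finset.sum_comm]

lemma my_symm {d : ℕ} {A : Matrix (Fin d) (Fin d) ℝ} (hA : A.IsHermitian) (x y : Fin d → ℝ) :
    y ⬝ᵥ A *ᵥ x = x ⬝ᵥ A *ᵥ y := by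
  have ht : Aᵀ = A := by ext i j; have := congrFun (congrFun hA.eq i) j; simpa using this
  rw [Matrix.dotProduct_mulVec, ← Matrix.mulVec_transpose, ht, dotProduct_comm]

lemma my_cs {d : ℕ} {A : Matrix (Fin d) (Fin d) ℝ} (hA : A.PosSemidef) (x y : Fin d → ℝ) :
    (x ⬝ᵥ A *ᵥ y) ^ 2 ≤ (x ⬝ᵥ A *ᵥ x) * (y ⬝ᵥ A *ᵥ y) := by
  have key : ∀ t : ℝ, 0 ≤ (y ⬝ᵥ A *ᵥ y) * (t * t) + (2 * (x ⬝ᵥ A *ᵥ y)) * t + (x ⬝ᵥ A *ᵥ x) := by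
    intro t
    have h := hA.dotProduct_mulVec_nonneg (x + t • y)
    rw [star_trivial] at h
    simp only [Matrix.mulVec_add, Matrix.mulVec_smul, add_dotProduct,
      smul_dotProduct, dotProduct_add, dotProduct_smul,
      smul_eq_mul] at h
    rw [my_symm hA.1 x y] at h
    nlinarith [h]
  have := discrim_le_zero key
  rw [discrim] at this
  nlinarith [this]

lemma my_cs_sqrt {d : ℕ} {A : Matrix (Fin d) (Fin d) ℝ} (hA : A.PosSemidef) (x y : Fin d → ℝ) :
    |x ⬝ᵥ A *ᵥ y| ≤ Real.sqrt (x ⬝ᵥ A *ᵥ x) * Real.sqrt (y ⬝ᵥ A *ᵥ y) := by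
  have hx : 0 ≤ x ⬝ᵥ A *ᵥ x := by simpa using hA.dotProduct_mulVec_nonneg x
  rw [← Real.sqrt_sq_eq_abs, ← Real.sqrt_mul hx]
  exact Real.sqrt_le_sqrt (my_cs hA x y)

theorem stmt_15 (d n : ℕ) (hd : 1 ≤ d) (lam : ℝ) (hlam : 0 < lam)
    (θ : Fin d → ℝ) (φs : Fin n → Fin d → ℝ) (y : Fin n → ℝ)
    (Λ : Matrix (Fin d) (Fin d) ℝ)
    (hΛ : Λ = lam • (1 : Matrix (Fin d) (Fin d) ℝ) + ∑ j, vecMulVec (φs j) (φs j))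
    (θhat : Fin d → ℝ) (hθhat : θhat = Λ⁻¹.mulVec (∑ j, y j • φs j))
    (φ : Fin d → ℝ) :
    |φ ⬝ᵥ (θhat - θ)| ≤
        Real.sqrt (φ ⬝ᵥ Λ⁻¹.mulVec φ) *
          (Real.sqrt ((∑ j, (y j - θ ⬝ᵥ φs j) • φs j) ⬝ᵥ
              Λ⁻¹.mulVec (∑ j, (y j - θ ⬝ᵥ φs j) • φs j))
            + lam * Real.sqrt (θ ⬝ᵥ Λ⁻¹.mulVec θ))
      ∧ lam * Real.sqrt (θ ⬝ᵥ Λ⁻¹.mulVec θ) ≤ Real.sqrt lam * Real.sqrt (∑ i, θ i ^ 2) := by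
  have hherm : Λ.IsHermitian := by
    rw [hΛ]; ext i j
    simp [Matrix.conjTranspose_apply, Matrix.add_apply, Matrix.smul_apply, Matrix.one_apply,
      Matrix.sum_apply, vecMulVec_apply, mul_comm, eq_comm]
  have hquad : ∀ x, Λ *ᵥ x = lam • x + ∑ j, (φs j ⬝ᵥ x) • φs j := by
    intro x
    rw [hΛ, Matrix.add_mulVec, Matrix.smul_mulVec, Matrix.one_mulVec, my_sum_mulVec]
    congr 1
    exact Finset.sum_congr rfl fun j _ => my_vecMulVec_mulVec _ _
  have hquad' : ∀ x, x ⬝ᵥ Λ *ᵥ x = lam * (x ⬝ᵥ x) + ∑ j, (φs j ⬝ᵥ x) ^ 2 := by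
    intro x
    rw [hquad, dotProduct_add, dotProduct_smul, my_dotProduct_sum, smul_eq_mul]
    congr 1
    exact Finset.sum_congr rfl fun j _ => by
      rw [dotProduct_smul, smul_eq_mul, dotProduct_comm]; ring
  have hpd : Λ.PosDef := by
    refine Matrix.PosDef.of_dotProduct_mulVec_pos hherm fun x hx => ?_
    rw [star_trivial, hquad']
    have h0 : 0 ≤ x ⬝ᵥ x := by
      simpa [dotProduct] using
        Finset.sum_nonneg (fun i (_ : i ∈ Finset.univ) => mul_self_nonneg (x i))
    have hne : x ⬝ᵥ x ≠ 0 := fun hc => hx (dotProduct_self_eq_zero.mp hc)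
    have h2 : 0 ≤ ∑ j, (φs j ⬝ᵥ x) ^ 2 :=
      Finset.sum_nonneg fun j _ => sq_nonneg _
    have := lt_of_le_of_ne h0 (Ne.symm hne)
    nlinarith
  have hdet : IsUnit Λ.det := hpd.det_pos.ne'.isUnit
  have hA := hpd.inv
  have hApsd := hA.posSemidef
  set A := Λ⁻¹ with hAdef
  set S := ∑ j, (y j - θ ⬝ᵥ φs j) • φs j with hSdef
  -- key identity
  have hkey : θhat - θ = A *ᵥ (S - lam • θ) := by
    have hsplit : S = (∑ j, y j • φs j) - ∑ j, (φs j ⬝ᵥ θ) • φs j := by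
      rw [hSdef, ← Finset.sum_sub_distrib]
      exact Finset.sum_congr rfl fun j _ => by
        rw [sub_smul, dotProduct_comm]
    have h2 : S - lam • θ = (∑ j, y j • φs j) - Λ *ᵥ θ := by
      rw [hsplit, hquad θ]; abel
    rw [h2, Matrix.mulVec_sub, Matrix.mulVec_mulVec, Matrix.nonsing_inv_mul _ hdet,
      Matrix.one_mulVec, hθhat]
  constructor
  · have h1 : |φ ⬝ᵥ (θhat - θ)| ≤
        Real.sqrt (φ ⬝ᵥ A *ᵥ φ) * Real.sqrt ((S - lam • θ) ⬝ᵥ A *ᵥ (S - lam • θ)) := by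
      rw [hkey]; exact my_cs_sqrt hApsd φ _
    refine h1.trans (mul_le_mul_of_nonneg_left ?_ (Real.sqrt_nonneg _))
    -- triangle inequality
    have hSS : 0 ≤ S ⬝ᵥ A *ᵥ S := by simpa using hApsd.dotProduct_mulVec_nonneg S
    have hθθ : 0 ≤ θ ⬝ᵥ A *ᵥ θ := by simpa using hApsd.dotProduct_mulVec_nonneg θ
    have hcross : |S ⬝ᵥ A *ᵥ (lam • θ)| ≤
        Real.sqrt (S ⬝ᵥ A *ᵥ S) * Real.sqrt ((lam • θ) ⬝ᵥ A *ᵥ (lam • θ)) :=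
      my_cs_sqrt hApsd S _
    have hvv : (lam • θ) ⬝ᵥ A *ᵥ (lam • θ) = lam ^ 2 * (θ ⬝ᵥ A *ᵥ θ) := by
      rw [Matrix.mulVec_smul, smul_dotProduct, dotProduct_smul]
      simp [smul_eq_mul]; ring
    have hvs : Real.sqrt ((lam • θ) ⬝ᵥ A *ᵥ (lam • θ)) = lam * Real.sqrt (θ ⬝ᵥ A *ᵥ θ) := by
      rw [hvv, Real.sqrt_mul (sq_nonneg lam), Real.sqrt_sq hlam.le]
    have hexp : (S - lam • θ) ⬝ᵥ A *ᵥ (S - lam • θ) =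
        S ⬝ᵥ A *ᵥ S - 2 * (S ⬝ᵥ A *ᵥ (lam • θ)) + (lam • θ) ⬝ᵥ A *ᵥ (lam • θ) := by
      simp only [Matrix.mulVec_sub, sub_dotProduct, dotProduct_sub]
      rw [my_symm hA.isHermitian S (lam • θ)]
      ring
    rw [hvs] at hcross
    have hsum : 0 ≤ Real.sqrt (S ⬝ᵥ A *ᵥ S) + lam * Real.sqrt (θ ⬝ᵥ A *ᵥ θ) := by
      positivity
    have hle : (S - lam • θ) ⬝ᵥ A *ᵥ (S - lam • θ) ≤
        (Real.sqrt (S ⬝ᵥ A *ᵥ S) + lam * Real.sqrt (θ ⬝ᵥ A *ᵥ θ)) ^ 2 := by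
      have e1 : Real.sqrt (S ⬝ᵥ A *ᵥ S) ^ 2 = S ⬝ᵥ A *ᵥ S := Real.sq_sqrt hSS
      have e2 : Real.sqrt (θ ⬝ᵥ A *ᵥ θ) ^ 2 = θ ⬝ᵥ A *ᵥ θ := Real.sq_sqrt hθθ
      have habs := abs_le.mp hcross
      rw [hexp, hvv]
      nlinarith [habs.1, habs.2]
    calc Real.sqrt ((S - lam • θ) ⬝ᵥ A *ᵥ (S - lam • θ))
        ≤ Real.sqrt ((Real.sqrt (S ⬝ᵥ A *ᵥ S) + lam * Real.sqrt (θ ⬝ᵥ A *ᵥ θ)) ^ 2) :=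
          Real.sqrt_le_sqrt hle
      _ = _ := Real.sqrt_sq hsum
  · -- second part
    set u := A *ᵥ θ with hu
    have hΛu : Λ *ᵥ u = θ := by
      rw [hu, Matrix.mulVec_mulVec, Matrix.mul_nonsing_inv _ hdet, Matrix.one_mulVec]
    have hq : θ ⬝ᵥ A *ᵥ θ = u ⬝ᵥ θ := dotProduct_comm θ u
    have hq0 : 0 ≤ θ ⬝ᵥ A *ᵥ θ := by simpa using hApsd.dotProduct_mulVec_nonneg θ
    have huΛu : u ⬝ᵥ θ = lam * (u ⬝ᵥ u) + ∑ j, (φs j ⬝ᵥ u) ^ 2 := by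
      rw [← hΛu, hquad' u]
    have hsumsq : 0 ≤ ∑ j, (φs j ⬝ᵥ u) ^ 2 := Finset.sum_nonneg fun j _ => sq_nonneg _
    have huu : 0 ≤ u ⬝ᵥ u := by
      simpa [dotProduct] using
        Finset.sum_nonneg (fun i (_ : i ∈ Finset.univ) => mul_self_nonneg (u i))
    have hθθ2 : 0 ≤ θ ⬝ᵥ θ := by
      simpa [dotProduct] using
        Finset.sum_nonneg (fun i (_ : i ∈ Finset.univ) => mul_self_nonneg (θ i))
    have hcs2 : (θ ⬝ᵥ u) ^ 2 ≤ (θ ⬝ᵥ θ) * (u ⬝ᵥ u) := by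
      have := my_cs (Matrix.PosSemidef.one (n := Fin d) (R := ℝ)) θ u
      simpa [Matrix.one_mulVec] using this
    have hmain : lam * (θ ⬝ᵥ A *ᵥ θ) ≤ θ ⬝ᵥ θ := by
      rcases eq_or_lt_of_le hq0 with h | h
      · rw [← h, mul_zero]; exact hθθ2
      · have h1 : lam * (u ⬝ᵥ u) ≤ u ⬝ᵥ θ := by rw [huΛu]; linarith
        rw [hq] at h ⊢
        rw [dotProduct_comm θ u] at hcs2
        nlinarith [h, h1, hcs2, hθθ2]
    have hθsum : ∑ i, θ i ^ 2 = θ ⬝ᵥ θ := by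
      simp [dotProduct, sq]
    rw [hθsum]
    have : lam * Real.sqrt (θ ⬝ᵥ A *ᵥ θ) = Real.sqrt (lam ^ 2 * (θ ⬝ᵥ A *ᵥ θ)) := by
      rw [Real.sqrt_mul (sq_nonneg lam), Real.sqrt_sq hlam.le]
    rw [this, ← Real.sqrt_mul hlam.le]
    apply Real.sqrt_le_sqrt
    nlinarith [hmain]
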